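/- Let Γ be a finite set, p_G a probability distribution on Γ, S a finite set, n ≥ 1, and P_e : Γ × S^n → [0,1] a function such that E_{γ∼p_G}[P_e(γ, s)] ≤ λ for all s ∈ S^n, where λ ∈ (0,1). Let G_1,...,G_{n^2} be i.i.d. with distribution p_G. If n is large enough that |S|^n · exp(−(3λ − e·λ) n^2) < 1, then with positive probability, (1/n^2) ∑_{m=1}^{n^2} P_e(G_m, s) ≤ 3λ simultaneously for all s ∈ S^n. Consequently there exist γ_1,...,γ_{n^2} ∈ Γ with (1/n^2) ∑_{m=1}^{n^2} P_e(γ_m, s) ≤ 3λ for every s ∈ S^n. -/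

import Mathlib

open Finset MeasureTheory ProbabilityTheory

lemma exp_le_linear_of_mem_Icc {x : ℝ} (hx : x ∈ Set.Icc (0:ℝ) 1) :
    Real.exp x ≤ 1 + (Real.exp 1 - 1) * x := by
  obtain ⟨h0, h1⟩ := hx
  have h := convexOn_exp.2 (Set.mem_univ (0:ℝ)) (Set.mem_univ (1:ℝ))
    (by linarith : (0:ℝ) ≤ 1 - x) h0 (by ring)
  simp only [smul_eq_mul, mul_zero, mul_one, zero_add, Real.exp_zero] at h
  calc Real.exp x ≤ 1 - x + x * Real.exp 1 := h
    _ = 1 + (Real.exp 1 - 1) * x := by ring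

lemma chernoff_discrete {Γ : Type} [Fintype Γ] (N : ℕ)
    (pG : Γ → ℝ) (hpG : ∀ γ, 0 ≤ pG γ) (hpG1 : ∑ γ, pG γ = 1)
    (f : Γ → ℝ) (hf : ∀ γ, f γ ∈ Set.Icc (0:ℝ) 1)
    (lam : ℝ) (hlam : 0 < lam) (hb : ∑ γ, pG γ * f γ ≤ lam) :
    ∑ g ∈ Finset.univ.filter
        (fun g : Fin N → Γ => 3 * lam * N < ∑ m, f (g m)), ∏ m, pG (g m)
      ≤ Real.exp (-(3 * lam - Real.exp 1 * lam) * N) := by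
  classical
  have he1 : (1:ℝ) ≤ Real.exp 1 := by
    have := Real.add_one_le_exp (1:ℝ); linarith
  have hprodnn : ∀ g : Fin N → Γ, 0 ≤ ∏ m, pG (g m) := fun g =>
    Finset.prod_nonneg fun m _ => hpG _
  have step1 : ∑ g ∈ Finset.univ.filter
        (fun g : Fin N → Γ => 3 * lam * N < ∑ m, f (g m)), ∏ m, pG (g m)
      ≤ ∑ g : Fin N → Γ,
          (∏ m, pG (g m)) * Real.exp (∑ m, f (g m) - 3 * lam * N) := by
    refine le_trans (Finset.sum_le_sum ?_) (Finset.sum_le_sum_of_subset_of_nonneg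
      (Finset.filter_subset _ _) ?_)
    · intro g hg
      rw [Finset.mem_filter] at hg
      exact le_mul_of_one_le_right (hprodnn g)
        (Real.one_le_exp (by linarith [hg.2]))
    · intro g _ _
      exact mul_nonneg (hprodnn g) (Real.exp_pos _).le
  have step2 : ∀ g : Fin N → Γ,
      (∏ m, pG (g m)) * Real.exp (∑ m, f (g m) - 3 * lam * N)
      = Real.exp (-(3 * lam * N)) * ∏ m, (pG (g m) * Real.exp (f (g m))) := by
    intro g
    rw [Real.exp_sub, Real.exp_sum, Finset.prod_mul_distrib]
    rw [div_eq_mul_inv, ← Real.exp_neg]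
    ring
  have step3 : ∑ g : Fin N → Γ, ∏ m, (pG (g m) * Real.exp (f (g m)))
      = (∑ γ, pG γ * Real.exp (f γ)) ^ N := by
    rw [← Fintype.prod_sum (fun (_ : Fin N) (γ : Γ) => pG γ * Real.exp (f γ))]
    simp [Finset.prod_const]
  have hsum_le : ∑ γ, pG γ * Real.exp (f γ) ≤ Real.exp (Real.exp 1 * lam) := by
    have h1 : ∑ γ, pG γ * Real.exp (f γ)
        ≤ ∑ γ, pG γ * (1 + (Real.exp 1 - 1) * f γ) :=
      Finset.sum_le_sum fun γ _ => mul_le_mul_of_nonneg_left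
        (exp_le_linear_of_mem_Icc (hf γ)) (hpG γ)
    have h2 : ∑ γ, pG γ * (1 + (Real.exp 1 - 1) * f γ)
        = 1 + (Real.exp 1 - 1) * ∑ γ, pG γ * f γ := by
      calc ∑ γ, pG γ * (1 + (Real.exp 1 - 1) * f γ)
          = ∑ γ, (pG γ + (Real.exp 1 - 1) * (pG γ * f γ)) :=
            Finset.sum_congr rfl fun γ _ => by ring
        _ = 1 + (Real.exp 1 - 1) * ∑ γ, pG γ * f γ := by
            rw [Finset.sum_add_distrib, hpG1, ← Finset.mul_sum]
    have h3 : 1 + (Real.exp 1 - 1) * ∑ γ, pG γ * f γ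
        ≤ 1 + (Real.exp 1 - 1) * lam := by nlinarith
    have h4 : 1 + (Real.exp 1 - 1) * lam ≤ Real.exp ((Real.exp 1 - 1) * lam) := by
      have := Real.add_one_le_exp ((Real.exp 1 - 1) * lam); linarith
    have h5 : Real.exp ((Real.exp 1 - 1) * lam) ≤ Real.exp (Real.exp 1 * lam) := by
      apply Real.exp_le_exp.2; nlinarith
    linarith
  have hsum_nn : 0 ≤ ∑ γ, pG γ * Real.exp (f γ) :=
    Finset.sum_nonneg fun γ _ => mul_nonneg (hpG γ) (Real.exp_pos _).le
  calc ∑ g ∈ Finset.univ.filter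
        (fun g : Fin N → Γ => 3 * lam * N < ∑ m, f (g m)), ∏ m, pG (g m)
      ≤ ∑ g : Fin N → Γ,
          (∏ m, pG (g m)) * Real.exp (∑ m, f (g m) - 3 * lam * N) := step1
    _ = Real.exp (-(3 * lam * N)) * (∑ γ, pG γ * Real.exp (f γ)) ^ N := by
        simp only [step2]
        rw [← Finset.mul_sum, step3]
    _ ≤ Real.exp (-(3 * lam * N)) * Real.exp (Real.exp 1 * lam) ^ N := by
        apply mul_le_mul_of_nonneg_left _ (Real.exp_pos _).le
        exact pow_le_pow_left₀ hsum_nn hsum_le N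
    _ = Real.exp (-(3 * lam - Real.exp 1 * lam) * N) := by
        rw [← Real.exp_nat_mul, ← Real.exp_add]
        congr 1; ring

theorem reduction_to_n_sq_codes
    {Γ : Type} [Fintype Γ] [Nonempty Γ] [MeasurableSpace Γ]
    [MeasurableSingletonClass Γ]
    {S : Type} [Fintype S] [Nonempty S]
    (n : ℕ) (hn : 0 < n)
    (Pe : Γ → (Fin n → S) → ℝ) (hPe : ∀ γ s, Pe γ s ∈ Set.Icc (0:ℝ) 1)
    (pG : Γ → ℝ) (hpG : ∀ γ, 0 ≤ pG γ) (hpG1 : ∑ γ, pG γ = 1)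
    (lam : ℝ) (hlam : lam ∈ Set.Ioo (0:ℝ) 1)
    (hbound : ∀ s : Fin n → S, ∑ γ, pG γ * Pe γ s ≤ lam)
    {Ω : Type*} [MeasurableSpace Ω] (P : Measure Ω) [IsProbabilityMeasure P]
    (G : Fin (n ^ 2) → Ω → Γ)
    (hmeas : ∀ m, Measurable (G m))
    (hindep : iIndepFun G P)
    (hdist : ∀ m γ, (P {ω | G m ω = γ}).toReal = pG γ)
    (hlarge : (Fintype.card S : ℝ) ^ n *
        Real.exp (-(3 * lam - Real.exp 1 * lam) * (n ^ 2 : ℕ)) < 1) :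
    0 < P {ω | ∀ s : Fin n → S,
        (1 / ((n ^ 2 : ℕ) : ℝ)) * ∑ m, Pe (G m ω) s ≤ 3 * lam} ∧
      ∃ γs : Fin (n ^ 2) → Γ, ∀ s : Fin n → S,
        (1 / ((n ^ 2 : ℕ) : ℝ)) * ∑ m, Pe (γs m) s ≤ 3 * lam := by
  classical
  have hNpos : 0 < n ^ 2 := pow_pos hn 2
  have hNR : (0:ℝ) < ((n ^ 2 : ℕ):ℝ) := by exact_mod_cast hNpos
  -- events determined by the tuple of codes
  have hE_eq : ∀ a : Fin (n ^ 2) → Γ,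
      {ω | ∀ m, G m ω = a m} = ⋂ m, G m ⁻¹' {a m} := by
    intro a; ext ω; simp [Set.mem_iInter]
  have hE_meas : ∀ a : Fin (n ^ 2) → Γ, MeasurableSet {ω | ∀ m, G m ω = a m} := by
    intro a; rw [hE_eq]
    exact MeasurableSet.iInter fun m => hmeas m (measurableSet_singleton _)
  have hE_prob : ∀ a : Fin (n ^ 2) → Γ,
      (P {ω | ∀ m, G m ω = a m}).toReal = ∏ m, pG (a m) := by
    intro a
    rw [hE_eq, hindep.meas_iInter
        (fun m => ⟨{a m}, measurableSet_singleton _, rfl⟩),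
      ENNReal.toReal_prod]
    exact Finset.prod_congr rfl fun m _ => hdist m (a m)
  -- probability of any event determined by the tuple
  have hprob : ∀ (q : (Fin (n ^ 2) → Γ) → Prop),
      (P {ω | q (fun m => G m ω)}).toReal
        = ∑ a ∈ Finset.univ.filter q, ∏ m, pG (a m) := by
    intro q
    have hdecomp : {ω | q (fun m => G m ω)}
        = ⋃ a ∈ Finset.univ.filter q, {ω | ∀ m, G m ω = a m} := by
      ext ω
      simp only [Set.mem_setOf_eq, Set.mem_iUnion, Finset.mem_filter,
        Finset.mem_univ, true_and]
      constructor
      · intro h; exact ⟨fun m => G m ω, h, fun m => rfl⟩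
      · rintro ⟨a, ha, hall⟩
        have : (fun m => G m ω) = a := funext hall
        rwa [this]
    have hdisj : (↑(Finset.univ.filter q) : Set (Fin (n ^ 2) → Γ)).PairwiseDisjoint
        (fun a => {ω | ∀ m, G m ω = a m}) := by
      intro a _ b _ hab
      refine Set.disjoint_left.2 fun ω ha hb => hab ?_
      funext m; rw [← ha m, ← hb m]
    rw [hdecomp, measure_biUnion_finset hdisj fun a _ => hE_meas a,
      ENNReal.toReal_sum (fun a _ => measure_ne_top P _)]
    exact Finset.sum_congr rfl fun a _ => hE_prob a
  -- the bad events
  let bad : (Fin n → S) → Set Ω :=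
    fun s => {ω | 3 * lam * (n ^ 2 : ℕ) < ∑ m, Pe (G m ω) s}
  have hbad_prob : ∀ s, (P (bad s)).toReal
      ≤ Real.exp (-(3 * lam - Real.exp 1 * lam) * (n ^ 2 : ℕ)) := by
    intro s
    have : bad s = {ω | (fun g : Fin (n ^ 2) → Γ => 3 * lam * (n ^ 2 : ℕ) < ∑ m, Pe (g m) s)
        (fun m => G m ω)} := rfl
    rw [this, hprob (fun g : Fin (n ^ 2) → Γ => 3 * lam * (n ^ 2 : ℕ) < ∑ m, Pe (g m) s)]
    exact chernoff_discrete (n ^ 2) pG hpG hpG1 (fun γ => Pe γ s) (fun γ => hPe γ s)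
      lam hlam.1 (hbound s)
  have hbad_meas : ∀ s, MeasurableSet (bad s) := by
    intro s
    have : bad s = (fun ω => ∑ m, Pe (G m ω) s) ⁻¹' Set.Ioi (3 * lam * (n ^ 2 : ℕ)) := rfl
    rw [this]
    have hmsum : Measurable fun ω => ∑ m, Pe (G m ω) s :=
      Finset.measurable_sum _ fun m _ =>
        (measurable_of_countable (fun γ => Pe γ s)).comp (hmeas m)
    exact hmsum measurableSet_Ioi
  -- union bound
  let U : Set Ω := ⋃ s, bad s
  have hU_meas : MeasurableSet U := MeasurableSet.iUnion fun s => hbad_meas s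
  have hU_lt_one : P U < 1 := by
    have h1 : P U ≤ ∑ s, P (bad s) :=
      (measure_iUnion_le _).trans_eq (tsum_fintype _)
    have hne : ∑ s, P (bad s) ≠ ⊤ :=
      ENNReal.sum_ne_top.2 fun s _ => measure_ne_top P _
    have h2 : (P U).toReal ≤ ∑ s, (P (bad s)).toReal := by
      rw [← ENNReal.toReal_sum (fun s _ => measure_ne_top P _)]
      exact ENNReal.toReal_mono hne h1
    have h3 : ∑ s, (P (bad s)).toReal
        ≤ (Fintype.card S : ℝ) ^ n * Real.exp (-(3 * lam - Real.exp 1 * lam) * (n ^ 2 : ℕ)) := by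
      calc ∑ s, (P (bad s)).toReal
          ≤ ∑ _s : Fin n → S, Real.exp (-(3 * lam - Real.exp 1 * lam) * (n ^ 2 : ℕ)) :=
            Finset.sum_le_sum fun s _ => hbad_prob s
        _ = (Fintype.card (Fin n → S) : ℝ)
            * Real.exp (-(3 * lam - Real.exp 1 * lam) * (n ^ 2 : ℕ)) := by
            rw [Finset.sum_const, Finset.card_univ, nsmul_eq_mul]
        _ = (Fintype.card S : ℝ) ^ n * Real.exp (-(3 * lam - Real.exp 1 * lam) * (n ^ 2 : ℕ)) := by
            congr 1
            rw [Fintype.card_fun, Fintype.card_fin]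
            push_cast; ring
    have h4 : (P U).toReal < 1 := lt_of_le_of_lt (h2.trans h3) hlarge
    exact (ENNReal.toReal_lt_toReal (measure_ne_top P U) ENNReal.one_ne_top).1
      (by simpa using h4)
  -- good event is complement of U
  have hgood_eq : {ω | ∀ s : Fin n → S,
      (1 / ((n ^ 2 : ℕ) : ℝ)) * ∑ m, Pe (G m ω) s ≤ 3 * lam} = Uᶜ := by
    ext ω
    simp only [Set.mem_setOf_eq, U, Set.mem_compl_iff, Set.mem_iUnion, bad,
      not_exists, not_lt]
    constructor
    · intro h s
      have := h s
      rw [one_div, inv_mul_le_iff₀ hNR] at this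
      linarith [this]
    · intro h s
      rw [one_div, inv_mul_le_iff₀ hNR]
      linarith [h s]
  have hgood_pos : 0 < P {ω | ∀ s : Fin n → S,
      (1 / ((n ^ 2 : ℕ) : ℝ)) * ∑ m, Pe (G m ω) s ≤ 3 * lam} := by
    rw [hgood_eq, prob_compl_eq_one_sub hU_meas]
    exact tsub_pos_iff_lt.2 hU_lt_one
  refine ⟨hgood_pos, ?_⟩
  obtain ⟨ω, hω⟩ := nonempty_of_measure_ne_zero hgood_pos.ne'
  exact ⟨fun m => G m ω, hω⟩
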